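/- Let s : ℕ → ℕ be a function with s(n) → ∞ and s(n) = o(n) as n → ∞. Then there exist a constant C > 0 and N ∈ ℕ such that for all n ≥ N the following holds: if f is an s(n)-approximately local bijection of V(Q_n) (so that, since s(n) < n/2, f has a unique dual f_⋆ and f_⋆ has a unique dual f_⋆⋆, both of which are bijections), and χ : V(Q_n) → {0,1} is a colouring such that f ∈ Isom^(2)(χ), then for every v ∈ V(Q_n), d(χ^(2)(v), χ^(2)(f_⋆⋆^(−1)(f(v)))) ≤ C·n·s(n). -/

import Mathlib

open MeasureTheory Filter Set Asymptotics Topology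

noncomputable section

/-- Vertices of the `n`-dimensional hypercube. -/
abbrev V (n : ℕ) : Type := Fin n → Bool

/-- The hypercube graph `Q_n`. -/
def Q (n : ℕ) : SimpleGraph (V n) :=
  SimpleGraph.fromRel (fun u v => hammingDist u v = 1)

/-- The neighbourhood of a vertex in `Q_n`. -/
def nbhd (n : ℕ) (v : V n) : Set (V n) := (Q n).neighborSet v

/-- The neighbourhood of a set of vertices. -/
def nbhdSet (n : ℕ) (A : Set (V n)) : Set (V n) := ⋃ v ∈ A, nbhd n v

/-- The set of vertices at graph distance exactly `k` from the set `A`. -/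
def sphereSet (n k : ℕ) (A : Set (V n)) : Set (V n) :=
  {w | (∃ v ∈ A, (Q n).dist v w = k) ∧ ∀ v ∈ A, k ≤ (Q n).dist v w}

/-- The ball of radius `r` about `v` (as a set of vertices). -/
def ball (n : ℕ) (v : V n) (r : ℕ) : Set (V n) := {w | (Q n).dist v w ≤ r}

/-- `χ^(r)(u) ≅ lam^(r)(w)` : the coloured `r`-balls around `u` (coloured by `χ`) and
`w` (coloured by `lam`) are isomorphic as coloured graphs. -/
def LocallyEq {C : Type} (n r : ℕ) (χ lam : V n → C) (u w : V n) : Prop :=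
  ∃ φ : ((Q n).induce (ball n u r)) ≃g ((Q n).induce (ball n w r)),
    ∀ x : ball n u r, χ x.1 = lam ((φ x).1)

/-- `d(χ^(r)(u), lam^(r)(w)) ≤ m` : some isomorphism of the `r`-balls realises at most `m`
colour disagreements. -/
def BallDistLE {C : Type} (n r : ℕ) (χ lam : V n → C) (u w : V n) (m : ℝ) : Prop :=
  ∃ φ : ((Q n).induce (ball n u r)) ≃g ((Q n).induce (ball n w r)),
    (({x : ball n u r | χ x.1 ≠ lam ((φ x).1)}.ncard : ℝ)) ≤ m

/-- A colouring is `r`-distinguishable if every `r`-locally equivalent colouring is obtained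
from it by a graph automorphism. -/
def Distinguishable {C : Type} (n r : ℕ) (χ : V n → C) : Prop :=
  ∀ lam : V n → C,
    (∃ f : V n ≃ V n, ∀ v, LocallyEq n r χ lam v (f v)) →
    ∃ g : (Q n) ≃g (Q n), lam = fun v => χ (g.symm v)

/-- `Isom^(r)(χ)` : the set of bijections `f` with `χ^(r)(v) ≅ (χ ∘ f⁻¹)^(r)(f v)` for all `v`. -/
def IsomSet {C : Type} (n r : ℕ) (χ : V n → C) : Set (V n ≃ V n) :=
  {f | ∀ v, LocallyEq n r χ (fun x => χ (f.symm x)) v (f v)}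

/-- `Cluster^r_R` : bijections `h` such that `|Γ^r(h(Γ(v)))| ≤ binom(n, r+1) + R` for all `v`. -/
def ClusterSet (n r : ℕ) (R : ℝ) : Set (V n ≃ V n) :=
  {h | ∀ v, ((sphereSet n r (⇑h '' nbhd n v)).ncard : ℝ) ≤ (n.choose (r+1) : ℝ) + R}

/-- `g` is a dual of `f` (at level `s`): `|f(Γ(v)) ∩ Γ(g(v))| ≥ n − s` for all `v`. -/
def IsDualF (n : ℕ) (s : ℝ) (f g : V n → V n) : Prop :=
  ∀ v, (n : ℝ) - s ≤ (((f '' nbhd n v) ∩ nbhd n (g v)).ncard : ℝ)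

/-- `f` is `s`-approximately local: it has a dual at level `s`. -/
def ApproxLocalF (n : ℕ) (s : ℝ) (f : V n → V n) : Prop :=
  ∃ g : V n → V n, IsDualF n s f g

/-- `Local_s` : the set of `s`-approximately local bijections. -/
def LocalSet (n : ℕ) (s : ℝ) : Set (V n ≃ V n) :=
  {f | ApproxLocalF n s ⇑f}

/-- `Mono^t_s` : bijections in `Cluster¹_s` for which, for every `v`, at most one vertex `w`
has `|f(Γ(v)) ∩ Γ(w)| > t`. -/
def MonoSet (n : ℕ) (s t : ℝ) : Set (V n ≃ V n) :=
  {f | f ∈ ClusterSet n 1 s ∧ ∀ v w₁ w₂ : V n,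
      t < (((⇑f '' nbhd n v) ∩ nbhd n w₁).ncard : ℝ) →
      t < (((⇑f '' nbhd n v) ∩ nbhd n w₂).ncard : ℝ) → w₁ = w₂}

/-- The dual `f_⋆` of `f` : for each `v`, a vertex `w` maximising `|f(Γ(v)) ∩ Γ(w)|`
(which is the unique dual vertex whenever `f` is `s`-approximately local with `s < n/2`). -/
def dualF (n : ℕ) (f : V n → V n) : V n → V n :=
  fun v => Classical.epsilon fun w =>
    ∀ w', ((f '' nbhd n v) ∩ nbhd n w').ncard ≤ ((f '' nbhd n v) ∩ nbhd n w).ncard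

/-- The Bernoulli measure on `Bool`: `false` (colour 0) has probability `p`,
`true` (colour 1) has probability `1 - p`. -/
def bern (p : ℝ) : Measure Bool :=
  ENNReal.ofReal p • Measure.dirac false + ENNReal.ofReal (1 - p) • Measure.dirac true

/-- The law of a random `(p, 1-p)`-colouring of `Q_n`: i.i.d. Bernoulli colours. -/
def colMeasure (n : ℕ) (p : ℝ) : Measure (V n → Bool) :=
  Measure.pi fun _ => bern p

/-- The uniform measure on `Fin q`. -/
def unifFin (q : ℕ) : Measure (Fin q) :=
  ((q : ENNReal))⁻¹ • Measure.count

/-- The law of a random `q`-colouring of `Q_n`: i.i.d. uniform colours. -/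
def qColMeasure (n q : ℕ) : Measure (V n → Fin q) :=
  Measure.pi fun _ => unifFin q

namespace HC

variable {n : ℕ}

def flip (x : V n) (i : Fin n) : V n := Function.update x i (!(x i))

def Dset (x y : V n) : Finset (Fin n) := Finset.univ.filter (fun i => x i ≠ y i)

lemma mem_Dset {x y : V n} {i : Fin n} : i ∈ Dset x y ↔ x i ≠ y i := by
  simp [Dset]

lemma hamming_eq_card (x y : V n) : hammingDist x y = (Dset x y).card := rfl

lemma Dset_comm (x y : V n) : Dset x y = Dset y x := by
  ext i; simp [mem_Dset, ne_comm]

lemma Dset_self (x : V n) : Dset x x = ∅ := by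
  ext i; simp [mem_Dset]

lemma eq_of_Dset_empty {x y : V n} (h : Dset x y = ∅) : x = y := by
  funext j
  by_contra hj
  have : j ∈ Dset x y := mem_Dset.2 hj
  simp [h] at this

lemma Dset_symmDiff (x y z : V n) : Dset x z = symmDiff (Dset x y) (Dset y z) := by
  ext i
  simp only [Finset.mem_symmDiff, mem_Dset]
  cases hx : x i <;> cases hy : y i <;> cases hz : z i <;> simp

lemma flip_apply (x : V n) (i j : Fin n) :
    flip x i j = if j = i then !(x i) else x j := by
  simp [flip, Function.update]

lemma Dset_flip (x : V n) (i : Fin n) : Dset (flip x i) x = {i} := by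
  ext j
  simp only [mem_Dset, flip_apply, Finset.mem_singleton]
  by_cases h : j = i
  · subst h; simp
  · simp [h]

lemma Dset_flip_left (x y : V n) (i : Fin n) :
    Dset (flip x i) y = symmDiff (Dset x y) {i} := by
  rw [Dset_symmDiff (flip x i) x y, Dset_flip, symmDiff_comm]

lemma eq_of_Dset_eq {x y z : V n} (h : Dset x y = Dset x z) : y = z := by
  funext j
  by_cases hj : j ∈ Dset x y
  · have hj' : j ∈ Dset x z := h ▸ hj
    rw [mem_Dset] at hj hj'
    revert hj hj'
    cases x j <;> cases y j <;> cases z j <;> simp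
  · have hj' : j ∉ Dset x z := h ▸ hj
    rw [mem_Dset, not_ne_iff] at hj hj'
    rw [← hj, ← hj']

lemma flip_of_Dset_singleton {x y : V n} {i : Fin n} (h : Dset x y = {i}) :
    y = flip x i := by
  apply eq_of_Dset_eq (x := x)
  rw [h, Dset_comm, Dset_flip]

lemma flip_injective (x : V n) : Function.Injective (flip x) := by
  intro i j h
  have h1 : Dset (flip x i) x = Dset (flip x j) x := by rw [h]
  rw [Dset_flip, Dset_flip] at h1
  exact Finset.singleton_injective h1

lemma hamming_flip (x : V n) (i : Fin n) : hammingDist x (flip x i) = 1 := by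
  rw [hamming_eq_card, Dset_comm, Dset_flip, Finset.card_singleton]

lemma adj_iff {x y : V n} : (Q n).Adj x y ↔ hammingDist x y = 1 := by
  rw [Q, SimpleGraph.fromRel_adj]
  constructor
  · rintro ⟨-, h | h⟩
    · exact h
    · rwa [hammingDist_comm]
  · intro h
    refine ⟨?_, Or.inl h⟩
    intro he
    rw [he] at h
    simp at h

lemma mem_nbhd {x y : V n} : y ∈ nbhd n x ↔ hammingDist x y = 1 := by
  rw [nbhd, SimpleGraph.mem_neighborSet, adj_iff]

lemma mem_nbhd' {x y : V n} : y ∈ nbhd n x ↔ ∃ i, y = flip x i := by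
  rw [mem_nbhd, hamming_eq_card, Finset.card_eq_one]
  constructor
  · rintro ⟨i, hi⟩
    exact ⟨i, flip_of_Dset_singleton hi⟩
  · rintro ⟨i, rfl⟩
    exact ⟨i, by rw [Dset_comm, Dset_flip]⟩

/-- A walk of length hammingDist. -/
lemma exists_walk (x y : V n) : ∃ w : (Q n).Walk x y, w.length = hammingDist x y := by
  generalize hk : hammingDist x y = k
  induction k generalizing x y with
  | zero =>
    have : x = y := hammingDist_eq_zero.1 hk
    subst this
    exact ⟨SimpleGraph.Walk.nil, rfl⟩
  | succ k ih =>
    have hne : (Dset x y).Nonempty := by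
      rw [← Finset.card_pos, ← hamming_eq_card, hk]; omega
    obtain ⟨i, hi⟩ := hne
    have hstep : Dset (flip x i) y = Dset x y \ {i} := by
      rw [Dset_flip_left]
      ext j
      simp only [Finset.mem_symmDiff, Finset.mem_singleton, Finset.mem_sdiff]
      constructor
      · rintro (⟨h1, h2⟩ | ⟨h1, h2⟩)
        · exact ⟨h1, h2⟩
        · exact absurd (h1 ▸ hi) h2
      · rintro ⟨h1, h2⟩
        exact Or.inl ⟨h1, h2⟩
    have hk' : hammingDist (flip x i) y = k := by
      rw [hamming_eq_card, hstep, Finset.card_sdiff_of_subset (by simpa using hi)]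
      rw [← hamming_eq_card, hk]; simp
    obtain ⟨w, hw⟩ := ih (flip x i) y hk'
    have hadj : (Q n).Adj x (flip x i) := adj_iff.2 (hamming_flip x i)
    exact ⟨SimpleGraph.Walk.cons hadj w, by simp [hw, hk']⟩

lemma hamming_le_walk {x y : V n} (w : (Q n).Walk x y) : hammingDist x y ≤ w.length := by
  induction w with
  | nil => simp
  | cons h p ih =>
    rename_i a b c
    calc hammingDist a c ≤ hammingDist a b + hammingDist b c := hammingDist_triangle _ _ _
    _ ≤ 1 + p.length := by
        have := adj_iff.1 h
        omega
    _ = (SimpleGraph.Walk.cons h p).length := by simp [add_comm]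

lemma dist_eq (x y : V n) : (Q n).dist x y = hammingDist x y := by
  obtain ⟨w, hw⟩ := exists_walk x y
  have h1 : (Q n).dist x y ≤ hammingDist x y := hw ▸ SimpleGraph.dist_le w
  have hreach : (Q n).Reachable x y := ⟨w⟩
  obtain ⟨p, hp⟩ := hreach.exists_walk_length_eq_dist
  have h2 : hammingDist x y ≤ (Q n).dist x y := hp ▸ hamming_le_walk p
  omega

lemma mem_ball_iff {x w : V n} {r : ℕ} : w ∈ ball n x r ↔ hammingDist x w ≤ r := by
  rw [ball, Set.mem_setOf_eq, dist_eq]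


lemma symmDiff_singleton_mem {D : Finset (Fin n)} {i : Fin n} (h : i ∈ D) :
    symmDiff D {i} = D.erase i := by
  ext j
  simp only [Finset.mem_symmDiff, Finset.mem_singleton, Finset.mem_erase]
  constructor
  · rintro (⟨h1, h2⟩ | ⟨h1, h2⟩)
    · exact ⟨h2, h1⟩
    · exact absurd (h1 ▸ h) h2
  · rintro ⟨h1, h2⟩
    exact Or.inl ⟨h2, h1⟩

lemma symmDiff_singleton_not_mem {D : Finset (Fin n)} {i : Fin n} (h : i ∉ D) :
    symmDiff D {i} = insert i D := by
  ext j
  simp only [Finset.mem_symmDiff, Finset.mem_singleton, Finset.mem_insert]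
  constructor
  · rintro (⟨h1, h2⟩ | ⟨h1, h2⟩)
    · exact Or.inr h1
    · exact Or.inl h1
  · rintro (rfl | h1)
    · exact Or.inr ⟨rfl, h⟩
    · exact Or.inl ⟨h1, fun he => h (he ▸ h1)⟩

lemma card_symmDiff_singleton_mem {D : Finset (Fin n)} {i : Fin n} (h : i ∈ D) :
    (symmDiff D {i}).card = D.card - 1 := by
  rw [symmDiff_singleton_mem h, Finset.card_erase_of_mem h]

lemma card_symmDiff_singleton_not_mem {D : Finset (Fin n)} {i : Fin n} (h : i ∉ D) :
    (symmDiff D {i}).card = D.card + 1 := by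
  rw [symmDiff_singleton_not_mem h, Finset.card_insert_of_notMem h]

/-- If `w` is adjacent to `x`, then `w = flip x i` for `i` in the difference set, with
card-2 a criterion. -/
lemma hamming_flip_one {x w : V n} {i : Fin n} :
    hammingDist (flip x i) w = 1 ↔
      ((i ∈ Dset x w ∧ (Dset x w).card = 2) ∨ (i ∉ Dset x w ∧ (Dset x w).card = 0)) := by
  rw [hamming_eq_card, Dset_flip_left]
  by_cases h : i ∈ Dset x w
  · rw [card_symmDiff_singleton_mem h]
    constructor
    · intro h1; exact Or.inl ⟨h, by omega⟩
    · rintro (⟨-, h2⟩ | ⟨h1, -⟩)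
      · omega
      · exact absurd h h1
  · rw [card_symmDiff_singleton_not_mem h]
    constructor
    · intro h1; exact Or.inr ⟨h, by omega⟩
    · rintro (⟨h1, -⟩ | ⟨-, h2⟩)
      · exact absurd h1 h
      · omega

/-- The common neighbours of two flips of `c`. -/
lemma common_of_flips {c : V n} {a b : Fin n} (hab : a ≠ b) {w : V n}
    (h1 : hammingDist (flip c a) w = 1) (h2 : hammingDist (flip c b) w = 1) :
    w = c ∨ w = flip (flip c a) b := by
  rw [hamming_flip_one] at h1 h2
  rcases h1 with ⟨ha, hc2⟩ | ⟨-, hc0⟩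
  · rcases h2 with ⟨hb, -⟩ | ⟨-, hc0⟩
    · right
      have hsub : ({a, b} : Finset (Fin n)) ⊆ Dset c w := by
        intro j hj
        rcases Finset.mem_insert.1 hj with rfl | hj
        · exact ha
        · rw [Finset.mem_singleton] at hj; exact hj ▸ hb
      have hcard : ({a, b} : Finset (Fin n)).card = 2 := by
        rw [Finset.card_insert_of_notMem (by simpa using hab), Finset.card_singleton]
      have hD : Dset c w = {a, b} :=
        (Finset.eq_of_subset_of_card_le hsub (by omega)).symm
      have hDt : Dset c (flip (flip c a) b) = {a, b} := by
        rw [Dset_comm, Dset_flip_left, Dset_flip, symmDiff_comm,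
          symmDiff_singleton_not_mem (by simpa using hab)]
      exact eq_of_Dset_eq (hD.trans hDt.symm)
    · omega
  · left
    exact (eq_of_Dset_empty (Finset.card_eq_zero.1 hc0)).symm


lemma common_mem {a b w : V n} (hab : a ≠ b) (h1 : w ∈ nbhd n a) (h2 : w ∈ nbhd n b) :
    ∃ i ∈ Dset a b, w = flip a i ∧ (Dset a b).card = 2 := by
  obtain ⟨i, rfl⟩ := mem_nbhd'.1 h1
  have h2' : hammingDist (flip a i) b = 1 := by
    rw [hammingDist_comm]; exact mem_nbhd.1 h2
  rcases hamming_flip_one.1 h2' with ⟨hi, hc⟩ | ⟨-, hc⟩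
  · exact ⟨i, hi, rfl, hc⟩
  · exact absurd (eq_of_Dset_empty (Finset.card_eq_zero.1 hc)) hab

lemma ncard_common_le {a b : V n} (hab : a ≠ b) :
    (nbhd n a ∩ nbhd n b).ncard ≤ 2 := by
  by_cases h2 : (Dset a b).card = 2
  · have hsub : nbhd n a ∩ nbhd n b ⊆ flip a '' ↑(Dset a b) := by
      rintro w ⟨hw1, hw2⟩
      obtain ⟨i, hi, rfl, -⟩ := common_mem hab hw1 hw2
      exact ⟨i, by simpa using hi, rfl⟩
    calc (nbhd n a ∩ nbhd n b).ncard ≤ (flip a '' ↑(Dset a b)).ncard :=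
          Set.ncard_le_ncard hsub (Set.toFinite _)
      _ ≤ (↑(Dset a b) : Set (Fin n)).ncard := Set.ncard_image_le (Set.toFinite _)
      _ = 2 := by rw [Set.ncard_coe_finset, h2]
  · have : nbhd n a ∩ nbhd n b = ∅ := by
      rw [Set.eq_empty_iff_forall_notMem]
      rintro w ⟨hw1, hw2⟩
      obtain ⟨-, -, -, hc⟩ := common_mem hab hw1 hw2
      exact h2 hc
    simp [this]

lemma hamming_two_of_common {a b w : V n} (hab : a ≠ b)
    (h1 : w ∈ nbhd n a) (h2 : w ∈ nbhd n b) : hammingDist a b = 2 := by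
  obtain ⟨-, -, -, hc⟩ := common_mem hab h1 h2
  rwa [hamming_eq_card]

lemma nbhd_eq_range (x : V n) : nbhd n x = Set.range (flip x) := by
  ext w
  rw [mem_nbhd', Set.mem_range]
  exact ⟨fun ⟨i, h⟩ => ⟨i, h.symm⟩, fun ⟨i, h⟩ => ⟨i, h.symm⟩⟩

lemma ncard_nbhd (x : V n) : (nbhd n x).ncard = n := by
  rw [nbhd_eq_range, ← Set.image_univ, Set.ncard_image_of_injective _ (flip_injective x)]
  simp [Set.ncard_univ]

lemma flip_mem_nbhd (x : V n) (i : Fin n) : flip x i ∈ nbhd n x := mem_nbhd'.2 ⟨i, rfl⟩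

/-- Counting quantity. -/
def q (f : V n → V n) (v w : V n) : ℕ := ((f '' nbhd n v) ∩ nbhd n w).ncard

lemma dualF_spec (f : V n → V n) (v w : V n) : q f v w ≤ q f v (dualF n f v) := by
  have hex : ∃ w0 : V n, ∀ w',
      ((f '' nbhd n v) ∩ nbhd n w').ncard ≤ ((f '' nbhd n v) ∩ nbhd n w0).ncard := by
    have : Nonempty (V n) := ⟨fun _ => false⟩
    obtain ⟨w0, hw0⟩ := Finite.exists_max (fun w => ((f '' nbhd n v) ∩ nbhd n w).ncard)
    exact ⟨w0, hw0⟩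
  exact Classical.epsilon_spec hex w

lemma two_nbhd_bound (X : Set (V n)) {m : ℕ} (hX : X.ncard ≤ m) {w w' : V n} (hww : w ≠ w') :
    (X ∩ nbhd n w).ncard + (X ∩ nbhd n w').ncard ≤ m + 2 := by
  have key := Set.ncard_union_add_ncard_inter (X ∩ nbhd n w) (X ∩ nbhd n w')
    (Set.toFinite _) (Set.toFinite _)
  have h1 : ((X ∩ nbhd n w) ∪ (X ∩ nbhd n w')).ncard ≤ m := by
    refine le_trans (Set.ncard_le_ncard ?_ (Set.toFinite _)) hX
    rintro x (⟨h, -⟩ | ⟨h, -⟩) <;> exact h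
  have h2 : ((X ∩ nbhd n w) ∩ (X ∩ nbhd n w')).ncard ≤ 2 := by
    refine le_trans (Set.ncard_le_ncard ?_ (Set.toFinite _)) (ncard_common_le hww)
    rintro x ⟨⟨-, h⟩, ⟨-, h'⟩⟩
    exact ⟨h, h'⟩
  omega

lemma ncard_image_nbhd {f : V n → V n} (hf : Function.Injective f) (v : V n) :
    (f '' nbhd n v).ncard = n := by
  rw [Set.ncard_image_of_injective _ hf, ncard_nbhd]

lemma image_inter_image {f : V n → V n} (hf : Function.Injective f) {v v' : V n} (hv : v ≠ v') :
    ((f '' nbhd n v) ∩ (f '' nbhd n v')).ncard ≤ 2 := by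
  rw [← Set.image_inter hf]
  calc (f '' (nbhd n v ∩ nbhd n v')).ncard ≤ (nbhd n v ∩ nbhd n v').ncard :=
        Set.ncard_image_le (Set.toFinite _)
    _ ≤ 2 := ncard_common_le hv

/-- Uniqueness of near-duals. -/
lemma unique_center {f : V n → V n} (hf : Function.Injective f) {v : V n} {w w' : V n} {t : ℕ}
    (h1 : n ≤ q f v w + t) (h2 : n ≤ q f v w' + t) (ht : 2 * t + 2 < n) : w = w' := by
  by_contra hne
  have := two_nbhd_bound (f '' nbhd n v) (le_of_eq (ncard_image_nbhd hf v)) hne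
  rw [q] at h1 h2
  omega

/-- Injectivity of the dual. -/
lemma F_inj (f : V n ≃ V n) {s : ℕ}
    (hdual : ∀ v, n ≤ q (⇑f) v (dualF n (⇑f) v) + s) (hs : 2 * s + 2 < n) :
    Function.Injective (dualF n (⇑f)) := by
  intro v v' he
  by_contra hne
  set w := dualF n (⇑f) v with hw
  have h1 : n ≤ ((⇑f '' nbhd n v) ∩ nbhd n w).ncard + s := hdual v
  have h2 : n ≤ ((⇑f '' nbhd n v') ∩ nbhd n w).ncard + s := by
    have := hdual v'
    rwa [q, ← he] at this
  have key := Set.ncard_union_add_ncard_inter ((⇑f '' nbhd n v) ∩ nbhd n w)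
    ((⇑f '' nbhd n v') ∩ nbhd n w) (Set.toFinite _) (Set.toFinite _)
  have hu : (((⇑f '' nbhd n v) ∩ nbhd n w) ∪ ((⇑f '' nbhd n v') ∩ nbhd n w)).ncard ≤ n := by
    refine le_trans (Set.ncard_le_ncard ?_ (Set.toFinite _)) (le_of_eq (ncard_nbhd w))
    rintro x (⟨-, h⟩ | ⟨-, h⟩) <;> exact h
  have hi : (((⇑f '' nbhd n v) ∩ nbhd n w) ∩ ((⇑f '' nbhd n v') ∩ nbhd n w)).ncard ≤ 2 := by
    refine le_trans (Set.ncard_le_ncard ?_ (Set.toFinite _)) (image_inter_image f.injective hne)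
    rintro x ⟨⟨h, -⟩, ⟨h', -⟩⟩
    exact ⟨h, h'⟩
  omega


lemma flip_flip (x : V n) (i : Fin n) : flip (flip x i) i = x := by
  funext j
  by_cases h : j = i
  · subst h; simp [flip_apply]
  · simp [flip_apply, h]

lemma Dset_z {u : V n} {i j : Fin n} (hij : i ≠ j) :
    Dset (flip (flip u i) j) u = {i, j} := by
  rw [Dset_flip_left, Dset_flip,
    symmDiff_singleton_not_mem (by simpa using (Ne.symm hij)), Finset.pair_comm]

lemma z_comm {u : V n} {i j : Fin n} (hij : i ≠ j) :
    flip (flip u i) j = flip (flip u j) i := by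
  apply eq_of_Dset_eq (x := u)
  rw [Dset_comm, Dset_z hij, Dset_comm u, Dset_z (Ne.symm hij), Finset.pair_comm]

lemma z_mem_nbhd_left (u : V n) (i j : Fin n) :
    flip (flip u i) j ∈ nbhd n (flip u i) := flip_mem_nbhd _ j

lemma z_mem_nbhd_right {u : V n} {i j : Fin n} (hij : i ≠ j) :
    flip (flip u i) j ∈ nbhd n (flip u j) := by
  rw [z_comm hij]; exact flip_mem_nbhd _ i

/-- The set of bad neighbours of `y` for `f`. -/
def BadSet (f : V n → V n) (y : V n) : Set (V n) :=
  {w | w ∈ nbhd n y ∧ f w ∉ nbhd n (dualF n f y)}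

lemma ncard_BadSet_le (f : V n ≃ V n) {s : ℕ}
    (hdual : ∀ v, n ≤ q (⇑f) v (dualF n (⇑f) v) + s) (y : V n) :
    (BadSet (⇑f) y).ncard ≤ s := by
  have himg : ((⇑f) '' nbhd n y) ∩ nbhd n (dualF n (⇑f) y)
      = (⇑f) '' (nbhd n y \ BadSet (⇑f) y) := by
    ext x
    constructor
    · rintro ⟨⟨w, hw, rfl⟩, hx⟩
      exact ⟨w, ⟨hw, fun hb => hb.2 hx⟩, rfl⟩
    · rintro ⟨w, ⟨hw, hb⟩, rfl⟩
      refine ⟨⟨w, hw, rfl⟩, ?_⟩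
      by_contra hfx
      exact hb ⟨hw, hfx⟩
  have h1 := hdual y
  rw [q, himg, Set.ncard_image_of_injective _ f.injective] at h1
  have hsub : BadSet (⇑f) y ⊆ nbhd n y := fun w hw => hw.1
  have h2 : (nbhd n y \ BadSet (⇑f) y).ncard = n - (BadSet (⇑f) y).ncard := by
    rw [Set.ncard_diff hsub (Set.toFinite _), ncard_nbhd]
  have h3 : (BadSet (⇑f) y).ncard ≤ n := by
    have h4 := Set.ncard_le_ncard hsub (Set.toFinite _)
    rwa [ncard_nbhd] at h4
  omega

lemma good_step (f : V n ≃ V n) {y w : V n}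
    (hw : w ∈ nbhd n y) (hb : w ∉ BadSet (⇑f) y) :
    f w ∈ nbhd n (dualF n (⇑f) y) := by
  by_contra h
  exact hb ⟨hw, h⟩

/-- A good pair of neighbours of `u` has duals at Hamming distance two. -/
lemma pair_dist (f : V n ≃ V n) (hFinj : Function.Injective (dualF n (⇑f)))
    {u : V n} {i j : Fin n} (hij : i ≠ j)
    (hbi : flip (flip u i) j ∉ BadSet (⇑f) (flip u i))
    (hbj : flip (flip u i) j ∉ BadSet (⇑f) (flip u j)) :
    hammingDist (dualF n (⇑f) (flip u i)) (dualF n (⇑f) (flip u j)) = 2 := by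
  have h1 := good_step f (z_mem_nbhd_left u i j) hbi
  have h2 := good_step f (z_mem_nbhd_right hij) hbj
  have hne : dualF n (⇑f) (flip u i) ≠ dualF n (⇑f) (flip u j) :=
    fun he => hij (flip_injective u (hFinj he))
  exact hamming_two_of_common hne h1 h2


lemma symmDiff_pair (D : Finset (Fin n)) {p q : Fin n} (hpq : p ≠ q) :
    symmDiff D {p, q} = symmDiff (symmDiff D {p}) {q} := by
  ext j
  simp only [Finset.mem_symmDiff, Finset.mem_insert, Finset.mem_singleton]
  by_cases hjp : j = p <;> by_cases hjq : j = q
  · exact absurd (hjp.symm.trans hjq) hpq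
  all_goals subst_vars
  all_goals tauto

lemma flipB {A B : V n} {p q : Fin n} (hpq : p ≠ q) (hDAB : Dset A B = {p, q}) :
    B = flip (flip A p) q := by
  apply eq_of_Dset_eq (x := A)
  rw [hDAB, Dset_comm, Dset_z hpq]

lemma Dset_c₁c₂ {A : V n} {p q : Fin n} (hpq : p ≠ q) :
    Dset (flip A p) (flip A q) = {p, q} := by
  rw [Dset_symmDiff _ A, Dset_flip, Dset_comm, Dset_flip,
    symmDiff_singleton_not_mem (by simpa using (Ne.symm hpq)), Finset.pair_comm]

lemma step6_geom {A B Fi' : V n} {p q : Fin n} (hpq : p ≠ q) (hDAB : Dset A B = {p, q})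
    (hA2 : hammingDist Fi' A = 2) (hB2 : hammingDist Fi' B = 2) :
    (Dset (flip A p) Fi').card = 1 ∨ (Dset (flip A q) Fi').card = 1 := by
  set D := Dset A Fi' with hD
  have hD2 : D.card = 2 := by rw [hD, Dset_comm, ← hamming_eq_card, hA2]
  have hDB : Dset B Fi' = symmDiff {p, q} D := by
    rw [Dset_symmDiff B A Fi', Dset_comm B A, hDAB]
  have hDB2 : (symmDiff {p, q} D).card = 2 := by
    rw [← hDB, ← hamming_eq_card, hammingDist_comm, hB2]
  rw [symmDiff_comm, symmDiff_pair D hpq] at hDB2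
  have hc₁ : Dset (flip A p) Fi' = symmDiff {p} D := by
    rw [Dset_symmDiff _ A Fi', Dset_flip]
  have hc₂ : Dset (flip A q) Fi' = symmDiff {q} D := by
    rw [Dset_symmDiff _ A Fi', Dset_flip]
  by_cases hp : p ∈ D <;> by_cases hq : q ∈ D
  · exfalso
    have hqm : q ∈ symmDiff D {p} := by
      rw [symmDiff_singleton_mem hp, Finset.mem_erase]
      exact ⟨Ne.symm hpq, hq⟩
    rw [card_symmDiff_singleton_mem hqm] at hDB2
    have hin := card_symmDiff_singleton_mem hp
    omega
  · left
    rw [hc₁, symmDiff_comm, card_symmDiff_singleton_mem hp, hD2]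
  · right
    rw [hc₂, symmDiff_comm, card_symmDiff_singleton_mem hq, hD2]
  · exfalso
    have hqm : q ∉ symmDiff D {p} := by
      rw [symmDiff_singleton_not_mem hp, Finset.mem_insert]
      push_neg
      exact ⟨Ne.symm hpq, hq⟩
    rw [card_symmDiff_singleton_not_mem hqm] at hDB2
    have hin := card_symmDiff_singleton_not_mem hp
    omega

lemma cross_geom {A B Fi' Fj' : V n} {p q x z : Fin n} (hpq : p ≠ q)
    (hDAB : Dset A B = {p, q})
    (hx : Dset (flip A p) Fi' = {x}) (hz : Dset (flip A q) Fj' = {z})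
    (hFiA : Fi' ≠ A) (hFiB : Fi' ≠ B) (hFjA : Fj' ≠ A) (hFjB : Fj' ≠ B)
    (h2 : hammingDist Fi' Fj' = 2) : x = z := by
  have hxp : x ≠ p := by
    intro he
    apply hFiA
    have : Fi' = flip (flip A p) x := flip_of_Dset_singleton hx
    rw [this, he, flip_flip]
  have hxq : x ≠ q := by
    intro he
    apply hFiB
    have : Fi' = flip (flip A p) x := flip_of_Dset_singleton hx
    rw [this, he, ← flipB hpq hDAB]
  have hzq : z ≠ q := by
    intro he
    apply hFjA
    have : Fj' = flip (flip A q) z := flip_of_Dset_singleton hz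
    rw [this, he, flip_flip]
  have hzp : z ≠ p := by
    intro he
    apply hFjB
    have : Fj' = flip (flip A q) z := flip_of_Dset_singleton hz
    rw [this, he, flipB hpq hDAB, z_comm hpq]
  by_contra hxz
  -- compute Dset Fi' Fj'
  have hkey : Dset Fi' Fj' = symmDiff {x} (symmDiff {p, q} {z}) := by
    rw [Dset_symmDiff Fi' (flip A p) Fj', Dset_comm Fi' _, hx,
      Dset_symmDiff (flip A p) (flip A q) Fj', Dset_c₁c₂ hpq, hz]
  have hSz : symmDiff ({p, q} : Finset (Fin n)) {z} = {z, p, q} := by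
    rw [symmDiff_singleton_not_mem (by simp [hzp, hzq])]
  have hxS : x ∉ ({z, p, q} : Finset (Fin n)) := by simp [hxz, hxp, hxq]
  have : (Dset Fi' Fj').card = 4 := by
    rw [hkey, hSz, symmDiff_comm, card_symmDiff_singleton_not_mem hxS]
    rw [Finset.card_insert_of_notMem (by simp [hzp, hzq]),
      Finset.card_insert_of_notMem (by simpa using hpq), Finset.card_singleton]
  rw [← hamming_eq_card, h2] at this
  omega

lemma boot_geom {c Fi' Fj' : V n} {x : Fin n} (hx : Dset c Fj' = {x})
    (h2 : hammingDist Fi' Fj' = 2) (hne : (Dset c Fi').card ≠ 1) :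
    x ∈ Dset c Fi' ∧ (Dset c Fi').card = 3 := by
  have hkey : Dset Fi' Fj' = symmDiff (Dset c Fi') {x} := by
    rw [Dset_symmDiff Fi' c Fj', Dset_comm Fi' c, hx]
  have h2' : (symmDiff (Dset c Fi') {x}).card = 2 := by
    rw [← hkey, ← hamming_eq_card, h2]
  by_cases hxm : x ∈ Dset c Fi'
  · rw [card_symmDiff_singleton_mem hxm] at h2'
    exact ⟨hxm, by omega⟩
  · rw [card_symmDiff_singleton_not_mem hxm] at h2'
    omega


open scoped Classical in
/-- The second common neighbour. -/
def zz (u : V n) (i j : Fin n) : V n := flip (flip u i) j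

def badp (f : V n → V n) (u : V n) (i j : Fin n) : Prop :=
  zz u i j ∈ BadSet f (flip u i) ∨ zz u i j ∈ BadSet f (flip u j)

lemma badp_comm {f : V n → V n} {u : V n} {i j : Fin n} (hij : i ≠ j) :
    badp f u i j ↔ badp f u j i := by
  unfold badp zz
  rw [z_comm hij]
  exact or_comm

open scoped Classical in
def degset (f : V n → V n) (u : V n) (i : Fin n) : Finset (Fin n) :=
  Finset.univ.filter (fun j => j ≠ i ∧ badp f u i j)

lemma mem_degset {f : V n → V n} {u : V n} {i j : Fin n} :
    j ∈ degset f u i ↔ (j ≠ i ∧ badp f u i j) := by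
  simp [degset]

def degp (f : V n → V n) (u : V n) (i : Fin n) : ℕ := (degset f u i).card

open scoped Classical in
def PairsP (f : V n → V n) (u : V n) : Finset (Fin n × Fin n) :=
  Finset.univ.filter (fun p => p.1 ≠ p.2 ∧ badp f u p.1 p.2)

open scoped Classical in
def GoodC (f : V n → V n) (u : V n) : Finset (Fin n) :=
  Finset.univ.filter (fun i => 16 * degp f u i ≤ n)

open scoped Classical

lemma degp_le {f : V n → V n} {u : V n} {i : Fin n} (hi : i ∈ GoodC f u) :
    16 * degp f u i ≤ n := (Finset.mem_filter.1 hi).2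

lemma mem_GoodC {f : V n → V n} {u : V n} {i : Fin n} (h : 16 * degp f u i ≤ n) :
    i ∈ GoodC f u := Finset.mem_filter.2 ⟨Finset.mem_univ i, h⟩

lemma not_badp_of_not_mem_degset {f : V n → V n} {u : V n} {i j : Fin n} (hij : j ≠ i)
    (h : j ∉ degset f u i) : ¬ badp f u i j := by
  intro hb
  exact h (mem_degset.2 ⟨hij, hb⟩)

lemma card_PairsP (f : V n ≃ V n) {s : ℕ}
    (hdual : ∀ v, n ≤ q (⇑f) v (dualF n (⇑f) v) + s) (u : V n) :
    (PairsP (⇑f) u).card ≤ 2 * (n * s) := by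
  set BadF : Fin n → Finset (V n) := fun i => (BadSet (⇑f) (flip u i)).toFinite.toFinset
    with hBadF
  have hBadFcard : ∀ i, (BadF i).card ≤ s := by
    intro i
    have h1 : (BadF i).card = (BadSet (⇑f) (flip u i)).ncard := by
      rw [← Set.ncard_coe_finset, Set.Finite.coe_toFinset]
    rw [h1]
    exact ncard_BadSet_le f hdual _
  set T : Finset (Fin n × V n) := Finset.univ.biUnion (fun i => {i} ×ˢ BadF i) with hT
  have hTcard : T.card ≤ n * s := by
    calc T.card ≤ ∑ i : Fin n, ({i} ×ˢ BadF i).card := Finset.card_biUnion_le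
      _ ≤ ∑ _i : Fin n, s := by
          refine Finset.sum_le_sum ?_
          intro i _
          rw [Finset.card_product, Finset.card_singleton, one_mul]
          exact hBadFcard i
      _ = n * s := by simp [Finset.sum_const, Finset.card_univ]
  set P1 : Finset (Fin n × Fin n) :=
    Finset.univ.filter (fun p => p.1 ≠ p.2 ∧ zz u p.1 p.2 ∈ BadSet (⇑f) (flip u p.1)) with hP1
  set P2 : Finset (Fin n × Fin n) :=
    Finset.univ.filter (fun p => p.1 ≠ p.2 ∧ zz u p.1 p.2 ∈ BadSet (⇑f) (flip u p.2)) with hP2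
  have hP1card : P1.card ≤ T.card := by
    apply Finset.card_le_card_of_injOn (fun p => (p.1, zz u p.1 p.2))
    · intro p hp
      rw [Finset.mem_coe, hP1, Finset.mem_filter] at hp; rw [Finset.mem_coe]
      refine Finset.mem_biUnion.2 ⟨p.1, Finset.mem_univ _, ?_⟩
      rw [Finset.mem_product]
      exact ⟨Finset.mem_singleton_self _, (Set.Finite.mem_toFinset _).2 hp.2.2⟩
    · intro p hp p' hp' he
      rw [Prod.mk.injEq] at he
      obtain ⟨h1, h2⟩ := he
      have : p.2 = p'.2 := by
        apply flip_injective (flip u p.1)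
        rw [← zz, ← zz, h2, h1]
      exact Prod.ext h1 this
  have hP2card : P2.card ≤ T.card := by
    apply Finset.card_le_card_of_injOn (fun p => (p.2, zz u p.1 p.2))
    · intro p hp
      rw [Finset.mem_coe, hP2, Finset.mem_filter] at hp; rw [Finset.mem_coe]
      refine Finset.mem_biUnion.2 ⟨p.2, Finset.mem_univ _, ?_⟩
      rw [Finset.mem_product]
      exact ⟨Finset.mem_singleton_self _, (Set.Finite.mem_toFinset _).2 hp.2.2⟩
    · intro p hp p' hp' he
      rw [Finset.mem_coe, hP2, Finset.mem_filter] at hp hp'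
      rw [Prod.mk.injEq] at he
      obtain ⟨h1, h2⟩ := he
      rw [zz, z_comm hp.2.1, zz, z_comm hp'.2.1, h1] at h2
      have : p.1 = p'.1 := by
        apply flip_injective (flip u p'.2)
        exact h2
      exact Prod.ext this h1
  have hsub : PairsP (⇑f) u ⊆ P1 ∪ P2 := by
    intro p hp
    rw [PairsP, Finset.mem_filter] at hp
    obtain ⟨hu_, hne, hb⟩ := hp
    rw [Finset.mem_union, hP1, hP2, Finset.mem_filter, Finset.mem_filter]
    rcases hb with hb | hb
    · exact Or.inl ⟨Finset.mem_univ _, hne, hb⟩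
    · exact Or.inr ⟨Finset.mem_univ _, hne, hb⟩
  calc (PairsP (⇑f) u).card ≤ (P1 ∪ P2).card := Finset.card_le_card hsub
    _ ≤ P1.card + P2.card := Finset.card_union_le _ _
    _ ≤ 2 * (n * s) := by omega

lemma sum_degp (f : V n → V n) (u : V n) :
    ∑ i : Fin n, degp f u i = (PairsP f u).card := by
  have h1 : (PairsP f u).card = ∑ i : Fin n,
      ((PairsP f u).filter (fun p => p.1 = i)).card :=
    Finset.card_eq_sum_card_fiberwise (fun p _ => Finset.mem_univ p.1)
  rw [h1]
  refine Finset.sum_congr rfl ?_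
  intro i _
  rw [degp]
  refine (Finset.card_bij (fun (p : Fin n × Fin n) (_ : p ∈ (PairsP f u).filter
      (fun p => p.1 = i)) => p.2) ?_ ?_ ?_).symm
  · intro p hp
    simp only [PairsP, Finset.mem_filter, Finset.mem_univ, true_and] at hp
    obtain ⟨⟨hne, hb⟩, h1'⟩ := hp
    rw [mem_degset]
    subst h1'
    exact ⟨Ne.symm hne, hb⟩
  · intro p hp p' hp' he
    simp only [PairsP, Finset.mem_filter, Finset.mem_univ, true_and] at hp hp'
    exact Prod.ext (hp.2.trans hp'.2.symm) he
  · intro j hj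
    rw [mem_degset] at hj
    refine ⟨(i, j), ?_, rfl⟩
    simp only [PairsP, Finset.mem_filter, Finset.mem_univ, true_and]
    exact ⟨⟨Ne.symm hj.1, hj.2⟩, trivial⟩

lemma card_GoodC (f : V n ≃ V n) {s : ℕ}
    (hdual : ∀ v, n ≤ q (⇑f) v (dualF n (⇑f) v) + s) (u : V n) (hn : 0 < n) :
    n ≤ (GoodC (⇑f) u).card + 32 * s := by
  set Bset : Finset (Fin n) := Finset.univ.filter (fun i => ¬ (16 * degp (⇑f) u i ≤ n))
    with hBset
  have hsplit : (GoodC (⇑f) u).card + Bset.card = n := by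
    rw [GoodC, hBset, Finset.card_filter_add_card_filter_not, Finset.card_univ,
      Fintype.card_fin]
  have hBsum : Bset.card * n ≤ 16 * ∑ i : Fin n, degp (⇑f) u i := by
    calc Bset.card * n = ∑ _i ∈ Bset, n := by rw [Finset.sum_const, smul_eq_mul]
      _ ≤ ∑ i ∈ Bset, 16 * degp (⇑f) u i := by
          refine Finset.sum_le_sum ?_
          intro i hi
          rw [hBset, Finset.mem_filter] at hi
          omega
      _ ≤ ∑ i : Fin n, 16 * degp (⇑f) u i := by
          refine Finset.sum_le_sum_of_subset (Finset.subset_univ _)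
      _ = 16 * ∑ i : Fin n, degp (⇑f) u i := by rw [Finset.mul_sum]
  have hkey : Bset.card * n ≤ 32 * (n * s) := by
    have := card_PairsP f hdual u
    rw [sum_degp] at hBsum
    omega
  have hBle : Bset.card ≤ 32 * s := by
    have h32 : Bset.card * n ≤ (32 * s) * n := by
      calc Bset.card * n ≤ 32 * (n * s) := hkey
        _ = (32 * s) * n := by ring
    exact Nat.le_of_mul_le_mul_right h32 hn
  omega


lemma main_center (f : V n ≃ V n) {s : ℕ}
    (hdual : ∀ v, n ≤ q (⇑f) v (dualF n (⇑f) v) + s)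
    (hs1 : 1 ≤ s) (hsn : 1000 * s ≤ n) (u : V n) :
    ∃ (c : V n) (pc : Fin n → Fin n),
      dualF n (dualF n (⇑f)) u = c ∧
      Set.InjOn pc ↑(GoodC (⇑f) u) ∧
      (∀ i ∈ GoodC (⇑f) u, dualF n (⇑f) (flip u i) = flip c (pc i)) := by
  classical
  have hn0 : 0 < n := by omega
  have hFinj : Function.Injective (dualF n (⇑f)) := F_inj f hdual (by omega)
  set F := dualF n (⇑f) with hFdef
  set G := GoodC (⇑f) u with hG
  have hGcard : n ≤ G.card + 32 * s := card_GoodC f hdual u hn0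
  have hnb : ∀ {i j : Fin n}, ¬ badp (⇑f) u i j →
      flip (flip u i) j ∉ BadSet (⇑f) (flip u i) ∧
      flip (flip u i) j ∉ BadSet (⇑f) (flip u j) := by
    intro i j hb
    rw [badp] at hb
    push_neg at hb
    exact hb
  have hpair : ∀ {i j : Fin n}, i ≠ j → ¬ badp (⇑f) u i j →
      hammingDist (F (flip u i)) (F (flip u j)) = 2 := by
    intro i j hij hb
    obtain ⟨h1, h2⟩ := hnb hb
    exact pair_dist f hFinj hij h1 h2
  have hFfi : Function.Injective (fun i => F (flip u i)) := by
    intro a b h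
    exact flip_injective u (hFinj h)
  -- choose i₁, i₂
  have hGpos : 0 < G.card := by omega
  obtain ⟨i₁, hi₁⟩ := Finset.card_pos.1 hGpos
  have hdeg1 : 16 * (degset (⇑f) u i₁).card ≤ n := degp_le hi₁
  have h2card : 0 < (G \ insert i₁ (degset (⇑f) u i₁)).card := by
    have hle := Finset.le_card_sdiff (insert i₁ (degset (⇑f) u i₁)) G
    have hic := Finset.card_insert_le i₁ (degset (⇑f) u i₁)
    omega
  obtain ⟨i₂, hi₂⟩ := Finset.card_pos.1 h2card
  rw [Finset.mem_sdiff] at hi₂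
  obtain ⟨hi₂G, hi₂n⟩ := hi₂
  have hi₂ne : i₂ ≠ i₁ := by
    intro he
    exact hi₂n (by rw [he]; exact Finset.mem_insert_self i₁ _)
  have hi₂nb : ¬ badp (⇑f) u i₁ i₂ :=
    not_badp_of_not_mem_degset hi₂ne (fun hm => hi₂n (Finset.mem_insert_of_mem hm))
  have h12 : i₁ ≠ i₂ := Ne.symm hi₂ne
  have hdeg2 : 16 * (degset (⇑f) u i₂).card ≤ n := degp_le hi₂G
  have hAB : hammingDist (F (flip u i₁)) (F (flip u i₂)) = 2 := hpair h12 hi₂nb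
  have hABcard : (Dset (F (flip u i₁)) (F (flip u i₂))).card = 2 := by
    rw [← hamming_eq_card]; exact hAB
  obtain ⟨p, qq, hpq, hDAB⟩ := Finset.card_eq_two.1 hABcard
  -- Y'
  set Y' : Finset (Fin n) := G.filter (fun i => i ≠ i₁ ∧ i ≠ i₂ ∧
      ¬ badp (⇑f) u i i₁ ∧ ¬ badp (⇑f) u i i₂) with hY'
  have hY'sub : Y' ⊆ G := Finset.filter_subset _ _
  have hY'card : 16 * G.card ≤ 16 * Y'.card + 32 + 2 * n := by
    have hsub : G \ (insert i₁ (insert i₂ (degset (⇑f) u i₁ ∪ degset (⇑f) u i₂))) ⊆ Y' := by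
      intro i hi
      rw [Finset.mem_sdiff] at hi
      obtain ⟨hiG, hin⟩ := hi
      simp only [Finset.mem_insert, Finset.mem_union, not_or] at hin
      obtain ⟨hne1, hne2, hnb1, hnb2⟩ := hin
      rw [hY', Finset.mem_filter]
      refine ⟨hiG, hne1, hne2, ?_, ?_⟩
      · rw [badp_comm hne1]
        exact not_badp_of_not_mem_degset hne1 hnb1
      · rw [badp_comm hne2]
        exact not_badp_of_not_mem_degset hne2 hnb2
    have h1 := Finset.le_card_sdiff (insert i₁ (insert i₂ (degset (⇑f) u i₁ ∪ degset (⇑f) u i₂))) G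
    have h2 := Finset.card_le_card hsub
    have h3 : (insert i₁ (insert i₂ (degset (⇑f) u i₁ ∪ degset (⇑f) u i₂))).card
        ≤ 2 + ((degset (⇑f) u i₁).card + (degset (⇑f) u i₂).card) := by
      have e1 := Finset.card_insert_le i₁ (insert i₂ (degset (⇑f) u i₁ ∪ degset (⇑f) u i₂))
      have e2 := Finset.card_insert_le i₂ (degset (⇑f) u i₁ ∪ degset (⇑f) u i₂)
      have e3 := Finset.card_union_le (degset (⇑f) u i₁) (degset (⇑f) u i₂)
      omega
    omega
  -- step 6
  have hstep6 : ∀ i ∈ Y', (Dset (flip (F (flip u i₁)) p) (F (flip u i))).card = 1 ∨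
      (Dset (flip (F (flip u i₁)) qq) (F (flip u i))).card = 1 := by
    intro i hi
    rw [hY', Finset.mem_filter] at hi
    obtain ⟨hiG, hne1, hne2, hb1, hb2⟩ := hi
    exact step6_geom hpq hDAB (hpair hne1 hb1) (hpair hne2 hb2)
  set Y₁ := Y'.filter (fun i => (Dset (flip (F (flip u i₁)) p) (F (flip u i))).card = 1)
    with hY₁
  set Y₂ := Y' \ Y₁ with hY₂
  have hY₁sub : Y₁ ⊆ Y' := Finset.filter_subset _ _
  have hY₂sub : Y₂ ⊆ Y' := Finset.sdiff_subset
  have hY₂prop : ∀ i ∈ Y₂, (Dset (flip (F (flip u i₁)) qq) (F (flip u i))).card = 1 := by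
    intro i hi
    rw [hY₂, Finset.mem_sdiff] at hi
    rcases hstep6 i hi.1 with h | h
    · exact absurd (Finset.mem_filter.2 ⟨hi.1, h⟩) hi.2
    · exact h
  have hY'fact : ∀ i ∈ Y', F (flip u i) ≠ F (flip u i₁) ∧ F (flip u i) ≠ F (flip u i₂) := by
    intro i hi
    rw [hY', Finset.mem_filter] at hi
    exact ⟨fun he => hi.2.1 (hFfi he), fun he => hi.2.2.1 (hFfi he)⟩
  have hcards : Y₁.card + Y₂.card = Y'.card := by
    rw [hY₂]
    have := Finset.card_sdiff_of_subset hY₁sub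
    have := Finset.card_le_card hY₁sub
    omega
  -- dichotomy
  have hdich : ∃ (c : V n) (W : Finset (Fin n)), W ⊆ Y' ∧
      (∀ i ∈ W, (Dset c (F (flip u i))).card = 1) ∧ 8 * Y'.card ≤ 8 * W.card + n := by
    by_cases h2Y₁ : 2 ≤ Y₁.card
    · refine ⟨flip (F (flip u i₁)) p, Y₁, hY₁sub, ?_, ?_⟩
      · intro i hi
        exact (Finset.mem_filter.1 hi).2
      · obtain ⟨a, ha, b, hb, hab⟩ := Finset.one_lt_card.1 h2Y₁
        have hY₂small : Y₂ ⊆ degset (⇑f) u a ∪ degset (⇑f) u b := by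
          intro j hj
          by_contra hjn
          rw [Finset.mem_union] at hjn
          push_neg at hjn
          obtain ⟨hj1, hj2⟩ := hjn
          have hja : j ≠ a := by
            intro he
            rw [hY₂, Finset.mem_sdiff] at hj
            exact hj.2 (by rw [he]; exact ha)
          have hjb : j ≠ b := by
            intro he
            rw [hY₂, Finset.mem_sdiff] at hj
            exact hj.2 (by rw [he]; exact hb)
          have hba : ¬ badp (⇑f) u a j := not_badp_of_not_mem_degset hja hj1
          have hbb : ¬ badp (⇑f) u b j := not_badp_of_not_mem_degset hjb hj2
          obtain ⟨xa, hxa⟩ := Finset.card_eq_one.1 ((Finset.mem_filter.1 ha).2)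
          obtain ⟨xb, hxb⟩ := Finset.card_eq_one.1 ((Finset.mem_filter.1 hb).2)
          obtain ⟨zj, hzj⟩ := Finset.card_eq_one.1 (hY₂prop j hj)
          have hfa := hY'fact a (hY₁sub ha)
          have hfb := hY'fact b (hY₁sub hb)
          have hfj := hY'fact j (hY₂sub hj)
          have hxaz : xa = zj := cross_geom hpq hDAB hxa hzj hfa.1 hfa.2 hfj.1 hfj.2
            (hpair (Ne.symm hja) hba)
          have hxbz : xb = zj := cross_geom hpq hDAB hxb hzj hfb.1 hfb.2 hfj.1 hfj.2
            (hpair (Ne.symm hjb) hbb)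
          apply hab
          apply hFfi
          apply eq_of_Dset_eq (x := flip (F (flip u i₁)) p)
          rw [hxa, hxb, hxaz, hxbz]
        have hda : 16 * (degset (⇑f) u a).card ≤ n := degp_le (hY'sub (hY₁sub ha))
        have hdb : 16 * (degset (⇑f) u b).card ≤ n := degp_le (hY'sub (hY₁sub hb))
        have hY₂card : Y₂.card ≤ (degset (⇑f) u a).card + (degset (⇑f) u b).card := by
          have h1 := Finset.card_le_card hY₂small
          have h2 := Finset.card_union_le (degset (⇑f) u a) (degset (⇑f) u b)
          omega
        omega
    · refine ⟨flip (F (flip u i₁)) qq, Y₂, hY₂sub, hY₂prop, ?_⟩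
      have hn8 : 8 ≤ n := by omega
      omega
  obtain ⟨c, W, hWsub, hWprop, hWcard⟩ := hdich
  -- choice function
  set pc : Fin n → Fin n := fun i =>
    if h : ∃ x, Dset c (F (flip u i)) = {x} then h.choose else p with hpc
  have hpc_spec : ∀ i, (Dset c (F (flip u i))).card = 1 → Dset c (F (flip u i)) = {pc i} := by
    intro i hcard
    have hex : ∃ x, Dset c (F (flip u i)) = {x} := Finset.card_eq_one.1 hcard
    rw [hpc]
    simp only [dif_pos hex]
    exact hex.choose_spec
  -- bootstrap
  have hboot : ∀ i ∈ G, (Dset c (F (flip u i))).card = 1 := by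
    intro i hiG
    by_contra hne1
    set js := W \ insert i (degset (⇑f) u i) with hjs
    have hdegi : 16 * (degset (⇑f) u i).card ≤ n := degp_le hiG
    have hjscard : 4 ≤ js.card := by
      have h1 := Finset.le_card_sdiff (insert i (degset (⇑f) u i)) W
      rw [← hjs] at h1
      have h2 := Finset.card_insert_le i (degset (⇑f) u i)
      omega
    have hjsprop : ∀ j ∈ js, pc j ∈ Dset c (F (flip u i)) ∧
        (Dset c (F (flip u i))).card = 3 := by
      intro j hj
      rw [hjs, Finset.mem_sdiff] at hj
      obtain ⟨hjW, hjn⟩ := hj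
      have hji : j ≠ i := by
        intro he
        exact hjn (by rw [he]; exact Finset.mem_insert_self i _)
      have hbj : ¬ badp (⇑f) u i j :=
        not_badp_of_not_mem_degset hji (fun hm => hjn (Finset.mem_insert_of_mem hm))
      have h2d : hammingDist (F (flip u i)) (F (flip u j)) = 2 := hpair (Ne.symm hji) hbj
      exact boot_geom (hpc_spec j (hWprop j hjW)) h2d hne1
    obtain ⟨j0, hj0⟩ := Finset.card_pos.1 (by omega : 0 < js.card)
    have hD3 : (Dset c (F (flip u i))).card = 3 := (hjsprop j0 hj0).2
    have hinj4 : js.card ≤ (Dset c (F (flip u i))).card := by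
      apply Finset.card_le_card_of_injOn (fun j => pc j) (fun j hj => (hjsprop j hj).1)
      intro a ha b hb he
      rw [Finset.mem_coe, hjs, Finset.mem_sdiff] at ha hb
      have he' : pc a = pc b := he
      have h1 : Dset c (F (flip u a)) = Dset c (F (flip u b)) := by
        rw [hpc_spec a (hWprop a ha.1), hpc_spec b (hWprop b hb.1), he']
      exact hFfi (eq_of_Dset_eq h1)
    omega
  have hflipdesc : ∀ i ∈ G, F (flip u i) = flip c (pc i) := by
    intro i hi
    exact flip_of_Dset_singleton (hpc_spec i (hboot i hi))
  have hinjOn : Set.InjOn pc ↑G := by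
    intro a ha b hb he
    apply hFfi
    show F (flip u a) = F (flip u b)
    rw [hflipdesc a ha, hflipdesc b hb, he]
  -- identification
  have himg : n ≤ q F u c + 32 * s := by
    have hsubset : (fun i => F (flip u i)) '' ↑G ⊆ (F '' nbhd n u) ∩ nbhd n c := by
      rintro x ⟨i, hi, rfl⟩
      refine ⟨⟨flip u i, flip_mem_nbhd u i, rfl⟩, ?_⟩
      rw [mem_nbhd, hamming_eq_card]
      exact hboot i hi
    have hcardim : ((fun i => F (flip u i)) '' ↑G).ncard = G.card := by
      rw [Set.ncard_image_of_injective _ hFfi, Set.ncard_coe_finset]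
    have hmono := Set.ncard_le_ncard hsubset (Set.toFinite _)
    rw [hcardim] at hmono
    rw [q]
    omega
  have hmax : n ≤ q F u (dualF n F u) + 32 * s := by
    have := dualF_spec F u c
    omega
  have hctr : dualF n F u = c := unique_center hFinj hmax himg (by omega)
  exact ⟨c, pc, hctr, hinjOn, hflipdesc⟩


/-- Extend an injective map on a finset to a permutation. -/
lemma exists_perm_extend {G : Finset (Fin n)} {pc : Fin n → Fin n}
    (hinj : Set.InjOn pc ↑G) :
    ∃ π : Equiv.Perm (Fin n), ∀ i ∈ G, π i = pc i := by
  classical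
  set T := G.image pc with hT
  have hcard : T.card = G.card := Finset.card_image_of_injOn hinj
  have hbij : Function.Bijective
      (fun x : {a // a ∈ G} => (⟨pc x.1, Finset.mem_image_of_mem pc x.2⟩ : {a // a ∈ T})) := by
    constructor
    · intro a b he
      rw [Subtype.mk.injEq] at he
      exact Subtype.ext (hinj a.2 b.2 he)
    · rintro ⟨y, hy⟩
      rw [hT, Finset.mem_image] at hy
      obtain ⟨i, hi, hiy⟩ := hy
      exact ⟨⟨i, hi⟩, Subtype.ext hiy⟩
  set e1 : {a // a ∈ G} ≃ {a // a ∈ T} := Equiv.ofBijective _ hbij with he1def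
  have e2 : {a // ¬ a ∈ G} ≃ {a // ¬ a ∈ T} := by
    apply Fintype.equivOfCardEq
    have h1 : Fintype.card {a // ¬ a ∈ G} = n - G.card := by
      rw [Fintype.card_subtype_compl, Fintype.card_fin, Fintype.card_coe]
    have h2 : Fintype.card {a // ¬ a ∈ T} = n - T.card := by
      rw [Fintype.card_subtype_compl, Fintype.card_fin, Fintype.card_coe]
    rw [h1, h2, hcard]
  refine ⟨(Equiv.sumCompl (· ∈ G)).symm.trans ((e1.sumCongr e2).trans
    (Equiv.sumCompl (· ∈ T))), ?_⟩
  intro i hi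
  simp only [Equiv.trans_apply]
  rw [Equiv.sumCompl_symm_apply_of_pos (p := fun x => x ∈ G) hi]
  show ((e1.sumCongr e2) (Sum.inl ⟨i, hi⟩) : _ ⊕ _).elim Subtype.val Subtype.val = pc i
  rw [Equiv.sumCongr_apply, Sum.map_inl, he1def]
  rfl

/-- The twisted translation automorphism of the cube. -/
def gmapE (u c : V n) (π : Equiv.Perm (Fin n)) : V n ≃ V n where
  toFun x := fun j => (c j).xor ((x (π.symm j)).xor (u (π.symm j)))
  invFun y := fun i => (u i).xor ((y (π i)).xor (c (π i)))
  left_inv x := by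
    funext i
    simp only [Equiv.symm_apply_apply]
    have : ∀ a b d : Bool, a.xor ((d.xor (b.xor a)).xor d) = b := by decide
    exact this (u i) (x i) (c (π i))
  right_inv y := by
    funext j
    simp only [Equiv.apply_symm_apply]
    have : ∀ a b d : Bool, a.xor ((d.xor (b.xor a)).xor d) = b := by decide
    exact this (c j) (y j) (u (π.symm j))

lemma gmapE_Dset (u c : V n) (π : Equiv.Perm (Fin n)) (x y : V n) :
    Dset (gmapE u c π x) (gmapE u c π y) = (Dset x y).image π := by
  ext j
  rw [mem_Dset, Finset.mem_image]
  constructor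
  · intro h
    refine ⟨π.symm j, ?_, Equiv.apply_symm_apply π j⟩
    rw [mem_Dset]
    intro he
    apply h
    show (c j).xor ((x (π.symm j)).xor (u (π.symm j))) =
      (c j).xor ((y (π.symm j)).xor (u (π.symm j)))
    rw [he]
  · rintro ⟨i, hi, rfl⟩
    rw [mem_Dset] at hi
    show (c (π i)).xor ((x (π.symm (π i))).xor (u (π.symm (π i)))) ≠
      (c (π i)).xor ((y (π.symm (π i))).xor (u (π.symm (π i))))
    rw [Equiv.symm_apply_apply]
    intro he
    apply hi
    have : ∀ a b d e : Bool, a.xor (b.xor e) = a.xor (d.xor e) → b = d := by decide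
    exact this _ _ _ _ he
lemma gmapE_hamming (u c : V n) (π : Equiv.Perm (Fin n)) (x y : V n) :
    hammingDist (gmapE u c π x) (gmapE u c π y) = hammingDist x y := by
  rw [hamming_eq_card, hamming_eq_card, gmapE_Dset,
    Finset.card_image_of_injective _ π.injective]

lemma gmapE_base (u c : V n) (π : Equiv.Perm (Fin n)) : gmapE u c π u = c := by
  funext j
  show (c j).xor ((u (π.symm j)).xor (u (π.symm j))) = c j
  rw [Bool.xor_self, Bool.xor_false]

lemma gmapE_flip (u c : V n) (π : Equiv.Perm (Fin n)) (x : V n) (i : Fin n) :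
    gmapE u c π (flip x i) = flip (gmapE u c π x) (π i) := by
  have h1 : Dset (gmapE u c π x) (gmapE u c π (flip x i)) = {π i} := by
    rw [gmapE_Dset, Dset_comm, Dset_flip, Finset.image_singleton]
  exact flip_of_Dset_singleton h1

/-- Induced ball isomorphism from a Hamming-isometric bijection. -/
def isoOfHamming (e : V n ≃ V n)
    (hham : ∀ x y, hammingDist (e x) (e y) = hammingDist x y)
    (a b : V n) (hab : e a = b) (r : ℕ) :
    ((Q n).induce (ball n a r)) ≃g ((Q n).induce (ball n b r)) := by
  refine ⟨Equiv.subtypeEquiv e ?_, ?_⟩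
  · intro x
    rw [mem_ball_iff, mem_ball_iff, ← hab, hham a x]
  · intro x y
    show (Q n).Adj (e x.1) (e y.1) ↔ (Q n).Adj x.1 y.1
    rw [adj_iff, adj_iff, hham]


lemma ncard_biUnion_le {ι : Type} [DecidableEq ι] (t : Finset ι) (g : ι → Set (V n)) {m : ℕ}
    (hb : ∀ i ∈ t, (g i).ncard ≤ m) : (⋃ i ∈ t, g i).ncard ≤ t.card * m := by
  induction t using Finset.induction with
  | empty => simp
  | insert a t' hnotmem ih =>
    rw [Finset.set_biUnion_insert]
    calc (g a ∪ ⋃ i ∈ t', g i).ncard ≤ (g a).ncard + (⋃ i ∈ t', g i).ncard :=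
          Set.ncard_union_le _ _
      _ ≤ m + t'.card * m := by
          have h1 := hb a (Finset.mem_insert_self a t')
          have h2 := ih (fun i hi => hb i (Finset.mem_insert_of_mem hi))
          omega
      _ ≤ (insert a t').card * m := by
          rw [Finset.card_insert_of_notMem hnotmem]
          ring_nf
          omega

lemma ncard_slice (u : V n) (i : Fin n) :
    {w : V n | (Dset u w).card = 2 ∧ i ∈ Dset u w}.ncard ≤ n := by
  have hsub : {w : V n | (Dset u w).card = 2 ∧ i ∈ Dset u w} ⊆
      Set.range (fun j => flip (flip u i) j) := by
    rintro w ⟨h2, hi⟩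
    obtain ⟨a, b, hab, hD⟩ := Finset.card_eq_two.1 h2
    rw [hD, Finset.mem_insert, Finset.mem_singleton] at hi
    rcases hi with rfl | rfl
    · refine ⟨b, ?_⟩
      apply (eq_of_Dset_eq (x := u) ?_).symm
      rw [hD, Dset_comm]
      exact (Dset_z hab).symm ▸ (Dset_z hab)
    · refine ⟨a, ?_⟩
      apply (eq_of_Dset_eq (x := u) ?_).symm
      rw [hD, Dset_comm, Dset_z (Ne.symm hab), Finset.pair_comm]
  calc {w : V n | (Dset u w).card = 2 ∧ i ∈ Dset u w}.ncard
      ≤ (Set.range (fun j => flip (flip u i) j)).ncard :=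
        Set.ncard_le_ncard hsub (Set.toFinite _)
    _ ≤ (Set.univ : Set (Fin n)).ncard := by
        rw [← Set.image_univ]
        exact Set.ncard_image_le (Set.toFinite _)
    _ = n := by rw [Set.ncard_univ, Nat.card_eq_fintype_card, Fintype.card_fin]

lemma ncard_sphere_one (u : V n) : {w : V n | hammingDist u w = 1}.ncard = n := by
  have : {w : V n | hammingDist u w = 1} = nbhd n u := by
    ext w
    rw [Set.mem_setOf_eq, mem_nbhd]
  rw [this, ncard_nbhd]


lemma err_bound (f : V n ≃ V n) {s : ℕ}
    (hdual : ∀ v, n ≤ q (⇑f) v (dualF n (⇑f) v) + s)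
    (hs1 : 1 ≤ s) (hsn : 1000 * s ≤ n) (u : V n) (χ : V n → Bool) :
    ∃ (e : V n ≃ V n),
      (∀ x y, hammingDist (e x) (e y) = hammingDist x y) ∧
      e u = dualF n (dualF n (⇑f)) u ∧
      {w | w ∈ ball n u 2 ∧ χ w ≠ χ (f.symm (e w))}.ncard ≤ 35 * (n * s) := by
  classical
  have hn0 : 0 < n := by omega
  obtain ⟨c, pc, hctr, hinjOn, hdesc⟩ := main_center f hdual hs1 hsn u
  obtain ⟨π, hπ⟩ := exists_perm_extend hinjOn
  set e := gmapE u c π with he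
  refine ⟨e, gmapE_hamming u c π, by rw [he, gmapE_base, hctr], ?_⟩
  set G := GoodC (⇑f) u with hG
  have hGcard : n ≤ G.card + 32 * s := card_GoodC f hdual u hn0
  set E2a : Set (V n) :=
    ⋃ i ∈ (Finset.univ \ G), {w : V n | (Dset u w).card = 2 ∧ i ∈ Dset u w} with hE2a
  set E2b : Set (V n) :=
    ⋃ i ∈ (Finset.univ : Finset (Fin n)), BadSet (⇑f) (flip u i) with hE2b
  have key : {w | w ∈ ball n u 2 ∧ χ w ≠ χ (f.symm (e w))} ⊆
      (({u} ∪ {w : V n | hammingDist u w = 1}) ∪ (E2a ∪ E2b)) ∪ {f.symm c} := by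
    rintro w ⟨hwball, hwerr⟩
    rw [mem_ball_iff] at hwball
    by_cases h0 : hammingDist u w = 0
    · exact Or.inl (Or.inl (Or.inl (hammingDist_eq_zero.1 h0).symm))
    by_cases h1 : hammingDist u w = 1
    · exact Or.inl (Or.inl (Or.inr h1))
    have h2 : (Dset u w).card = 2 := by
      rw [← hamming_eq_card]
      omega
    obtain ⟨i, j, hij, hDij⟩ := Finset.card_eq_two.1 h2
    by_cases hgi : i ∈ G
    case neg =>
      refine Or.inl (Or.inr (Or.inl ?_))
      rw [hE2a]
      refine Set.mem_biUnion (Finset.mem_sdiff.2 ⟨Finset.mem_univ i, hgi⟩) ?_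
      exact ⟨h2, by rw [hDij]; exact Finset.mem_insert_self i _⟩
    by_cases hgj : j ∈ G
    case neg =>
      refine Or.inl (Or.inr (Or.inl ?_))
      rw [hE2a]
      refine Set.mem_biUnion (Finset.mem_sdiff.2 ⟨Finset.mem_univ j, hgj⟩) ?_
      refine ⟨h2, by rw [hDij]; exact Finset.mem_insert_of_mem (Finset.mem_singleton_self j)⟩
    by_cases hbad : w ∈ E2b
    · exact Or.inl (Or.inr (Or.inr hbad))
    by_cases hfc : w = f.symm c
    · exact Or.inr hfc
    exfalso
    have hwz : w = flip (flip u i) j := by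
      apply eq_of_Dset_eq (x := u)
      rw [hDij, Dset_comm u (flip (flip u i) j), Dset_z hij]
    have hnotbad : ∀ k : Fin n, w ∉ BadSet (⇑f) (flip u k) := by
      intro k hk
      exact hbad (by rw [hE2b]; exact Set.mem_biUnion (Finset.mem_univ k) hk)
    have hfi : f w ∈ nbhd n (flip c (pc i)) := by
      rw [← hdesc i hgi]
      exact good_step f (by rw [hwz]; exact flip_mem_nbhd _ _) (hnotbad i)
    have hfj : f w ∈ nbhd n (flip c (pc j)) := by
      rw [← hdesc j hgj]
      refine good_step f ?_ (hnotbad j)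
      rw [hwz, z_comm hij]
      exact flip_mem_nbhd _ _
    have hpcij : pc i ≠ pc j := by
      intro hpe
      exact hij (hinjOn (Finset.mem_coe.2 hgi) (Finset.mem_coe.2 hgj) hpe)
    rcases common_of_flips hpcij (mem_nbhd.1 hfi) (mem_nbhd.1 hfj) with hcc | hok
    · apply hfc
      rw [← hcc, Equiv.symm_apply_apply]
    · apply hwerr
      have hgw : e w = flip (flip c (pc i)) (pc j) := by
        rw [he, hwz, gmapE_flip, gmapE_flip, gmapE_base, hπ i hgi, hπ j hgj]
      rw [hgw, ← hok, Equiv.symm_apply_apply]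
  have hcount : {w | w ∈ ball n u 2 ∧ χ w ≠ χ (f.symm (e w))}.ncard ≤
      ((1 + n) + ((32 * s) * n + n * s)) + 1 := by
    have hE2acard : E2a.ncard ≤ (32 * s) * n := by
      have h1 : E2a.ncard ≤ (Finset.univ \ G).card * n := by
        rw [hE2a]
        refine ncard_biUnion_le _ _ ?_
        intro i _
        exact ncard_slice u i
      have h2 : (Finset.univ \ G).card ≤ 32 * s := by
        have h3 := Finset.card_sdiff_of_subset (Finset.subset_univ G)
        rw [Finset.card_univ, Fintype.card_fin] at h3
        omega
      calc E2a.ncard ≤ (Finset.univ \ G).card * n := h1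
        _ ≤ (32 * s) * n := Nat.mul_le_mul_right n h2
    have hE2bcard : E2b.ncard ≤ n * s := by
      rw [hE2b]
      have := ncard_biUnion_le (Finset.univ : Finset (Fin n))
        (fun i => BadSet (⇑f) (flip u i)) (fun i _ => ncard_BadSet_le f hdual (flip u i))
      rwa [Finset.card_univ, Fintype.card_fin] at this
    calc {w | w ∈ ball n u 2 ∧ χ w ≠ χ (f.symm (e w))}.ncard
        ≤ ((({u} ∪ {w : V n | hammingDist u w = 1}) ∪ (E2a ∪ E2b)) ∪ {f.symm c}).ncard :=
          Set.ncard_le_ncard key (Set.toFinite _)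
      _ ≤ (({u} ∪ {w : V n | hammingDist u w = 1}) ∪ (E2a ∪ E2b)).ncard + 1 := by
          have h4 := Set.ncard_union_le (({u} ∪ {w : V n | hammingDist u w = 1}) ∪ (E2a ∪ E2b))
            ({f.symm c} : Set (V n))
          rw [Set.ncard_singleton] at h4
          exact h4
      _ ≤ (({u} : Set (V n)).ncard + {w : V n | hammingDist u w = 1}.ncard)
           + (E2a.ncard + E2b.ncard) + 1 := by
          have h5 := Set.ncard_union_le ({u} ∪ {w : V n | hammingDist u w = 1}) (E2a ∪ E2b)
          have h6 := Set.ncard_union_le ({u} : Set (V n)) {w : V n | hammingDist u w = 1}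
          have h7 := Set.ncard_union_le E2a E2b
          omega
      _ ≤ ((1 + n) + ((32 * s) * n + n * s)) + 1 := by
          rw [Set.ncard_singleton, ncard_sphere_one]
          omega
  have hfinal : ((1 + n) + ((32 * s) * n + n * s)) + 1 ≤ 35 * (n * s) := by
    have hns : n ≤ n * s := Nat.le_mul_of_pos_right n (by omega)
    have h32 : (32 * s) * n = 32 * (n * s) := by ring
    omega
  omega

end HC

/-- Lemma 3.16 (f-h-inverse): if `f` is `s(n)`-approximately local and `f ∈ Isom^(2)(χ)`,
then for every `v`, `d(χ^(2)(v), χ^(2)(f_⋆⋆⁻¹(f(v)))) ≤ C n s(n)`. -/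
theorem two_ball_close_to_double_dual
    (s : ℕ → ℕ) (hs : Tendsto s atTop atTop)
    (hso : (fun n => (s n : ℝ)) =o[atTop] fun n => (n : ℝ)) :
    ∃ C : ℝ, 0 < C ∧ ∃ N : ℕ, ∀ n : ℕ, N ≤ n → ∀ f : V n ≃ V n,
      ApproxLocalF n (s n) ⇑f →
      ∀ χ : V n → Bool, f ∈ IsomSet n 2 χ →
      ∀ v u : V n, dualF n (dualF n ⇑f) u = f v →
        BallDistLE n 2 χ χ v u (C * n * s n) := by
  refine ⟨40, by norm_num, ?_⟩
  have h1 : ∀ᶠ k in atTop, 1 ≤ s k := hs.eventually (Filter.eventually_ge_atTop 1)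
  have h2 : ∀ᶠ k in atTop, ‖((s k : ℕ) : ℝ)‖ ≤ (1/1000 : ℝ) * ‖((k : ℕ) : ℝ)‖ :=
    hso.def (by norm_num)
  obtain ⟨N, hN⟩ := Filter.eventually_atTop.1 (h1.and h2)
  refine ⟨N, ?_⟩
  intro n hn f hf χ hχ v u hvu
  obtain ⟨hs1, hs2⟩ := hN n hn
  have hsn : 1000 * s n ≤ n := by
    rw [Real.norm_natCast, Real.norm_natCast] at hs2
    have h3 : (1000 : ℝ) * ((s n : ℕ) : ℝ) ≤ ((n : ℕ) : ℝ) := by linarith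
    exact_mod_cast h3
  obtain ⟨g, hg⟩ := hf
  have hdual : ∀ w, n ≤ HC.q (⇑f) w (dualF n (⇑f) w) + s n := by
    intro w
    have h3 := hg w
    have h4 := HC.dualF_spec (⇑f) w (g w)
    have h5 : (n : ℝ) ≤ (((⇑f '' nbhd n w) ∩ nbhd n (g w)).ncard : ℝ) + ((s n : ℕ) : ℝ) := by
      linarith
    have h6 : n ≤ ((⇑f '' nbhd n w) ∩ nbhd n (g w)).ncard + s n := by exact_mod_cast h5
    unfold HC.q at h4 ⊢
    omega
  obtain ⟨e, hham, heu, hcount⟩ := HC.err_bound f hdual hs1 hsn u χ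
  have heu' : e u = f v := by rw [heu, hvu]
  obtain ⟨φv, hφv⟩ := hχ v
  set ψ := HC.isoOfHamming e hham u (f v) heu' 2 with hψ
  refine ⟨φv.trans ψ.symm, ?_⟩
  have hmap : ∀ x : ball n v 2, x ∈ {x : ball n v 2 | χ x.1 ≠ χ (((φv.trans ψ.symm) x).1)} →
      (((φv.trans ψ.symm) x).1) ∈ {w | w ∈ ball n u 2 ∧ χ w ≠ χ (f.symm (e w))} := by
    intro x hx
    rw [Set.mem_setOf_eq] at hx
    refine ⟨((φv.trans ψ.symm) x).2, ?_⟩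
    have he1 : e (((φv.trans ψ.symm) x).1) = (φv x).1 := by
      have h7 : ψ (ψ.symm (φv x)) = φv x := ψ.apply_symm_apply (φv x)
      exact congrArg Subtype.val h7
    have h10 : χ (x : V n) = χ (f.symm ((φv x) : V n)) := hφv x
    have h8 : χ (f.symm (e (((φv.trans ψ.symm) x).1))) = χ x.1 := by
      rw [he1]
      exact h10.symm
    rw [h8]
    exact Ne.symm hx
  have hinj : Set.InjOn (fun x : ball n v 2 => ((φv.trans ψ.symm) x).1)
      {x : ball n v 2 | χ x.1 ≠ χ (((φv.trans ψ.symm) x).1)} := by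
    intro a _ b _ he
    have h9 : (φv.trans ψ.symm) a = (φv.trans ψ.symm) b := Subtype.ext he
    exact (φv.trans ψ.symm).toEquiv.injective h9
  have hle : {x : ball n v 2 | χ x.1 ≠ χ (((φv.trans ψ.symm) x).1)}.ncard ≤
      {w | w ∈ ball n u 2 ∧ χ w ≠ χ (f.symm (e w))}.ncard :=
    Set.ncard_le_ncard_of_injOn _ hmap hinj (Set.toFinite _)
  have hfin : {x : ball n v 2 | χ x.1 ≠ χ (((φv.trans ψ.symm) x).1)}.ncard ≤ 35 * (n * s n) :=
    le_trans hle hcount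
  calc ({x : ball n v 2 | χ x.1 ≠ χ (((φv.trans ψ.symm) x).1)}.ncard : ℝ)
      ≤ ((35 * (n * s n) : ℕ) : ℝ) := by exact_mod_cast hfin
    _ ≤ 40 * (n : ℝ) * (s n : ℝ) := by
        push_cast
        nlinarith [mul_nonneg (Nat.cast_nonneg (α := ℝ) n) (Nat.cast_nonneg (α := ℝ) (s n))]

end
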